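/- Let F : ℝᵈ → ℝᵈ be locally Lipschitz and Y an ℝᵈ-valued random variable such that F(Y) has a locally bounded density with respect to Lebesgue measure. Then Y has a locally bounded density. -/

import Mathlib

open MeasureTheory

theorem density_transfer_locally_lipschitz {Ω : Type*} [MeasureSpace Ω] (P : Measure Ω)
    [IsProbabilityMeasure P] (d : ℕ) (hd : 0 < d)
    (Y : Ω → (Fin d → ℝ)) (hY : Measurable Y)
    (F : (Fin d → ℝ) → (Fin d → ℝ))
    (hF : ∀ s : Set (Fin d → ℝ), Bornology.IsBounded s →
      ∃ K : NNReal, LipschitzOnWith K F s)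
    (ρ : (Fin d → ℝ) → ENNReal) (hmeas : Measurable ρ)
    (hdens : Measure.map (fun ω => F (Y ω)) P = volume.withDensity ρ)
    (hloc : ∀ K : Set (Fin d → ℝ), IsCompact K →
      ∃ M : ENNReal, M < ⊤ ∧ ∀ y ∈ K, ρ y ≤ M) :
    ∃ ρY : (Fin d → ℝ) → ENNReal,
      Measure.map Y P = volume.withDensity ρY ∧
      ∀ K : Set (Fin d → ℝ), IsCompact K →
        ∃ M : ENNReal, M < ⊤ ∧ ∀ y ∈ K, ρY y ≤ M := by
  classical
  -- F is continuous
  have Fcont : Continuous F := by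
    rw [continuous_iff_continuousAt]
    intro x
    obtain ⟨K, hK⟩ := hF (Metric.ball x 1) Metric.isBounded_ball
    exact hK.continuousOn.continuousAt (Metric.ball_mem_nhds x one_pos)
  have Fmeas : Measurable F := Fcont.measurable
  -- Lipschitz constants on balls
  have hFn : ∀ n : ℕ, ∃ K : NNReal, LipschitzOnWith K F (Metric.closedBall (0 : Fin d → ℝ) n) :=
    fun n => hF _ Metric.isBounded_closedBall
  choose K hK using hFn
  -- bounds on ρ on images of balls
  have himg : ∀ n : ℕ, IsCompact (F '' Metric.closedBall (0 : Fin d → ℝ) n) :=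
    fun n => (isCompact_closedBall _ _).image Fcont
  have hMn : ∀ n : ℕ, ∃ M : ENNReal, M < ⊤ ∧ ∀ y ∈ F '' Metric.closedBall (0 : Fin d → ℝ) n, ρ y ≤ M :=
    fun n => hloc _ (himg n)
  choose M hMlt hMle using hMn
  set craw : ℕ → ENNReal := fun n => M n * (K n : ENNReal) ^ (d : ℝ) with hcraw
  have hcrawlt : ∀ n, craw n < ⊤ := by
    intro n
    exact ENNReal.mul_lt_top (hMlt n)
      (ENNReal.rpow_lt_top_of_nonneg (Nat.cast_nonneg d) ENNReal.coe_ne_top)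
  -- Hausdorff measure = volume
  have hHaus : (μH[(d : ℝ)] : Measure (Fin d → ℝ)) = volume := by
    have := MeasureTheory.hausdorffMeasure_pi_real (ι := Fin d)
    rwa [Fintype.card_fin] at this
  set μY : Measure (Fin d → ℝ) := Measure.map Y P with hμY
  -- Key estimate
  have key : ∀ (s : Set (Fin d → ℝ)), MeasurableSet s → ∀ n : ℕ, s ⊆ Metric.closedBall (0 : Fin d → ℝ) n →
      μY s ≤ craw n * volume s := by
    intro s hs n hsub
    set t : Set (Fin d → ℝ) := toMeasurable volume (F '' s) ∩ (F '' Metric.closedBall (0 : Fin d → ℝ) n) with ht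
    have htm : MeasurableSet t :=
      (measurableSet_toMeasurable _ _).inter (himg n).measurableSet
    have hsubt : ∀ ω, Y ω ∈ s → F (Y ω) ∈ t := by
      intro ω hω
      exact ⟨subset_toMeasurable _ _ ⟨Y ω, hω, rfl⟩, ⟨Y ω, hsub hω, rfl⟩⟩
    have h1 : μY s ≤ (Measure.map (fun ω => F (Y ω)) P) t := by
      rw [hμY, Measure.map_apply hY hs, Measure.map_apply (show Measurable fun ω => F (Y ω) from Fmeas.comp hY) htm]
      exact measure_mono fun ω hω => hsubt ω hω
    have h2 : (Measure.map (fun ω => F (Y ω)) P) t ≤ M n * volume t := by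
      rw [hdens, withDensity_apply _ htm]
      calc ∫⁻ x in t, ρ x ≤ ∫⁻ _ in t, M n := by
            refine setLIntegral_mono measurable_const fun x hx => ?_
            exact hMle n x hx.2
        _ = M n * volume t := by rw [setLIntegral_const]
    have h3 : volume t ≤ volume (F '' s) := by
      calc volume t ≤ volume (toMeasurable volume (F '' s)) :=
            measure_mono Set.inter_subset_left
        _ = volume (F '' s) := measure_toMeasurable _
    have h4 : volume (F '' s) ≤ (K n : ENNReal) ^ (d : ℝ) * volume s := by
      have := ((hK n).mono hsub).hausdorffMeasure_image_le (d := (d : ℝ)) (Nat.cast_nonneg d)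
      rwa [hHaus] at this
    calc μY s ≤ M n * volume t := h1.trans h2
      _ ≤ M n * ((K n : ENNReal) ^ (d : ℝ) * volume s) :=
          mul_le_mul_right (h3.trans h4) _
      _ = craw n * volume s := by rw [hcraw]; ring
  -- the partition pieces
  set D : ℕ → Set (Fin d → ℝ) := fun n => {x : Fin d → ℝ | ⌈‖x‖⌉₊ = n} with hD
  have hDmeas : ∀ n, MeasurableSet (D n) := by
    intro n
    have : Measurable fun x : Fin d → ℝ => ⌈‖x‖⌉₊ :=
      (Nat.ceil_mono.measurable).comp continuous_norm.measurable
    exact this (measurableSet_singleton n)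
  have hDsub : ∀ n, D n ⊆ Metric.closedBall (0 : Fin d → ℝ) n := by
    intro n x hx
    rw [Metric.mem_closedBall, dist_zero_right]
    calc ‖x‖ ≤ (⌈‖x‖⌉₊ : ℝ) := Nat.le_ceil _
      _ = n := by rw [hx]
  have hDdisj : Pairwise (Function.onFun Disjoint D) := by
    intro m n hmn
    exact Set.disjoint_left.mpr fun x hx hx' => hmn (hx.symm.trans hx')
  have hDunion : (⋃ n, D n) = Set.univ := by
    ext x; simp only [Set.mem_iUnion, Set.mem_univ, iff_true]
    exact ⟨⌈‖x‖⌉₊, rfl⟩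
  -- cumulative constants
  set c : ℕ → ENNReal := fun n => ∑ k ∈ Finset.range (n + 1), craw k with hc
  have hclt : ∀ n, c n < ⊤ := by
    intro n
    rw [hc]
    exact ENNReal.sum_lt_top.mpr fun k _ => hcrawlt k
  have hcmono : Monotone c := by
    intro m n hmn
    exact Finset.sum_le_sum_of_subset (Finset.range_subset_range.mpr (by omega))
  have hcrawle : ∀ n, craw n ≤ c n := by
    intro n
    exact Finset.single_le_sum (f := craw) (fun k _ => zero_le)
      (Finset.self_mem_range_succ n)
  set g : (Fin d → ℝ) → ENNReal := fun x => c ⌈‖x‖⌉₊ with hg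
  -- absolute continuity
  have hac : μY ≪ volume := by
    refine Measure.AbsolutelyContinuous.mk fun s hs hs0 => ?_
    have : μY s = μY (⋃ n, s ∩ D n) := by
      rw [← Set.inter_iUnion, hDunion, Set.inter_univ]
    rw [this]
    refine le_antisymm ?_ zero_le
    calc μY (⋃ n, s ∩ D n) ≤ ∑' n, μY (s ∩ D n) := measure_iUnion_le _
      _ ≤ ∑' n, craw n * volume (s ∩ D n) := by
          refine ENNReal.tsum_le_tsum fun n => ?_
          exact key _ (hs.inter (hDmeas n)) n (Set.inter_subset_right.trans (hDsub n))
      _ = 0 := by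
          refine ENNReal.tsum_eq_zero.mpr fun n => ?_
          have : volume (s ∩ D n) = 0 :=
            le_antisymm (le_trans (measure_mono Set.inter_subset_left) hs0.le) zero_le
          rw [this, mul_zero]
  haveI : IsProbabilityMeasure μY := Measure.isProbabilityMeasure_map hY.aemeasurable
  set f : (Fin d → ℝ) → ENNReal := μY.rnDeriv volume with hf
  have hwd : volume.withDensity f = μY := Measure.withDensity_rnDeriv_eq _ _ hac
  -- f ≤ g a.e.
  have hfg : f ≤ᵐ[volume] g := by
    refine ae_le_of_forall_setLIntegral_le_of_sigmaFinite (μY.measurable_rnDeriv volume)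
      fun s hs hsfin => ?_
    have hLHS : ∫⁻ x in s, f x = μY s := by
      rw [← withDensity_apply _ hs, hwd]
    rw [hLHS]
    have hsplit : μY s ≤ ∑' n, μY (s ∩ D n) := by
      have : μY s = μY (⋃ n, s ∩ D n) := by
        rw [← Set.inter_iUnion, hDunion, Set.inter_univ]
      rw [this]
      exact measure_iUnion_le _
    have hRHS : ∫⁻ x in s, g x = ∑' n, ∫⁻ x in s ∩ D n, g x := by
      have : s = ⋃ n, s ∩ D n := by
        rw [← Set.inter_iUnion, hDunion, Set.inter_univ]
      conv_lhs => rw [this]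
      rw [lintegral_iUnion (fun n => hs.inter (hDmeas n))
        (hDdisj.mono fun _ _ h => h.mono Set.inter_subset_right Set.inter_subset_right)]
    rw [hRHS]
    refine hsplit.trans (ENNReal.tsum_le_tsum fun n => ?_)
    have h1 : μY (s ∩ D n) ≤ craw n * volume (s ∩ D n) :=
      key _ (hs.inter (hDmeas n)) n (Set.inter_subset_right.trans (hDsub n))
    have h2 : ∫⁻ x in s ∩ D n, g x = c n * volume (s ∩ D n) := by
      have hgeq : ∀ x ∈ s ∩ D n, g x = c n := by
        intro x hx
        rw [hg]
        simp only
        rw [hx.2]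
      rw [setLIntegral_congr_fun (hs.inter (hDmeas n)) (fun x hx => hgeq x hx),
        setLIntegral_const]
    rw [h2]
    exact h1.trans (mul_le_mul_left (hcrawle n) _)
  -- the density
  refine ⟨fun x => min (f x) (g x), ?_, ?_⟩
  · have : (fun x => min (f x) (g x)) =ᵐ[volume] f := by
      filter_upwards [hfg] with x hx
      exact min_eq_left hx
    rw [withDensity_congr_ae this, hwd]
  · intro Kc hKc
    obtain ⟨R, hR⟩ := hKc.isBounded.subset_closedBall 0
    refine ⟨c ⌈R⌉₊, hclt _, fun y hy => ?_⟩
    have hyR : ‖y‖ ≤ R := by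
      have := hR hy
      rwa [Metric.mem_closedBall, dist_zero_right] at this
    calc min (f y) (g y) ≤ g y := min_le_right _ _
      _ ≤ c ⌈R⌉₊ := hcmono (Nat.ceil_le_ceil hyR)
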